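/- In the graph G constructed for the Steiner-tree reduction (vertices p_i, q_i, o_i; o_i joined only to p_i and q_i with weight-0 edges; Euclidean weights between endpoints of distinct segments), any Steiner tree T' spanning all terminals o_1,...,o_n that contains exactly one of {p_i, q_i} for each i yields, after deleting the terminals o_i and their incident edges, a spanning tree on a point set containing exactly one endpoint per segment with the same cost: cost after deletion = cost(T'). -/
import Mathlib


open scoped Classical

/-- Vertices of the auxiliary graph: `Sum.inl (i, b)` is an endpoint of segment `i`
(`b = false` for `p i`, `b = true` for `q i`), and `Sum.inr i` is the terminal `o i`. -/
abbrev SV (n : ℕ) := (Fin n × Bool) ⊕ Fin n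

/-- The position of an endpoint vertex (terminals get a junk position). -/
noncomputable def vpos {n : ℕ} (p q : Fin n → EuclideanSpace ℝ (Fin 2)) :
    SV n → EuclideanSpace ℝ (Fin 2)
  | Sum.inl (i, b) => if b then q i else p i
  | Sum.inr _ => 0

/-- The auxiliary graph: endpoints of distinct segments are pairwise adjacent
(the edges `(p i, q i)` are absent), and the terminal `o i` is adjacent exactly to
the two endpoints of segment `i`. -/
def steinerGraph (n : ℕ) : SimpleGraph (SV n) :=
  SimpleGraph.fromRel (fun u v =>
    match u, v with
    | Sum.inl (i, _), Sum.inl (j, _) => i ≠ j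
    | Sum.inl (i, _), Sum.inr j => i = j
    | Sum.inr i, Sum.inl (j, _) => i = j
    | Sum.inr _, Sum.inr _ => False)

/-- Edge weights: Euclidean distance between endpoints of distinct segments;
weight `0` on the edges incident to terminals. -/
noncomputable def wfun {n : ℕ} (p q : Fin n → EuclideanSpace ℝ (Fin 2)) :
    SV n → SV n → ℝ
  | Sum.inl x, Sum.inl y => dist (vpos p q (Sum.inl x)) (vpos p q (Sum.inl y))
  | _, _ => 0

/-- Cost of a subgraph: half the sum over ordered pairs of adjacent vertices. -/
noncomputable def subCost {n : ℕ} (p q : Fin n → EuclideanSpace ℝ (Fin 2))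
    (H : (steinerGraph n).Subgraph) : ℝ :=
  (1 / 2) * ∑ u : SV n, ∑ v : SV n, if H.Adj u v then wfun p q u v else 0

/-- A Steiner tree: a connected acyclic subgraph containing all terminals. -/
def IsSteinerTree {n : ℕ} (H : (steinerGraph n).Subgraph) : Prop :=
  H.Connected ∧ (∀ i : Fin n, Sum.inr i ∈ H.verts) ∧ H.coe.IsAcyclic

lemma steiner_adj_inr {n : ℕ} (i : Fin n) (w : SV n)
    (h : (steinerGraph n).Adj (Sum.inr i) w) :
    w = Sum.inl (i, false) ∨ w = Sum.inl (i, true) := by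
  rcases h with ⟨hne, h | h⟩ <;>
  · rcases w with ⟨j, b⟩ | j
    · simp only at h
      subst h
      rcases b with _ | _ <;> simp
    · simp at h

/-- The terminal `o i` has at most one neighbor in `H`. -/
lemma unique_nbr {n : ℕ} (H : (steinerGraph n).Subgraph)
    (hone : ∀ i : Fin n,
      Xor' (Sum.inl (i, false) ∈ H.verts) (Sum.inl (i, true) ∈ H.verts))
    {i : Fin n} {w w' : SV n} (h : H.Adj (Sum.inr i) w) (h' : H.Adj (Sum.inr i) w') :
    w = w' := by
  have hw := steiner_adj_inr i w (H.adj_sub h)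
  have hw' := steiner_adj_inr i w' (H.adj_sub h')
  have hmw : w ∈ H.verts := H.edge_vert h.symm
  have hmw' : w' ∈ H.verts := H.edge_vert h'.symm
  rcases hone i with ⟨hf, ht⟩ | ⟨ht, hf⟩ <;>
    rcases hw with rfl | rfl <;> rcases hw' with rfl | rfl <;> tauto

/-- Lifting a path in `H` avoiding terminals at its endpoints to the deleted subgraph. -/
lemma lift_walk {n : ℕ} (H : (steinerGraph n).Subgraph)
    (hone : ∀ i : Fin n,
      Xor' (Sum.inl (i, false) ∈ H.verts) (Sum.inl (i, true) ∈ H.verts))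
    {a b : H.verts} (w : H.coe.Walk a b) (hp : w.IsPath)
    (ha : (a : SV n) ∉ Set.range (Sum.inr : Fin n → SV n))
    (hb : (b : SV n) ∉ Set.range (Sum.inr : Fin n → SV n))
    (ha' : (a : SV n) ∈ (H.deleteVerts (Set.range Sum.inr)).verts)
    (hb' : (b : SV n) ∈ (H.deleteVerts (Set.range Sum.inr)).verts) :
    (H.deleteVerts (Set.range Sum.inr)).coe.Reachable ⟨a, ha'⟩ ⟨b, hb'⟩ := by
  induction w with
  | nil =>
      exact SimpleGraph.Reachable.refl _
  | @cons a x b h w ih =>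
      by_cases hx : (x : SV n) ∈ Set.range (Sum.inr : Fin n → SV n)
      · -- x is a terminal; derive a contradiction
        obtain ⟨i, hi⟩ := hx
        cases w with
        | nil => exact absurd (hi ▸ Set.mem_range_self i) hb
        | @cons x y b h' w' =>
            -- h : H.coe.Adj a x, h' : H.coe.Adj x y
            have hax : H.Adj (Sum.inr i) (a : SV n) := by
              have h2 : H.Adj (x : SV n) (a : SV n) := h.symm
              rwa [← hi] at h2
            have hxy : H.Adj (Sum.inr i) (y : SV n) := by
              have h2 : H.Adj (x : SV n) (y : SV n) := h'
              rwa [← hi] at h2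
            have : (a : SV n) = (y : SV n) := unique_nbr H hone hax hxy
            have hay : a = y := Subtype.ext this
            exfalso
            have hnodup := hp.support_nodup
            rw [SimpleGraph.Walk.support_cons] at hnodup
            have := (List.nodup_cons.mp hnodup).1
            apply this
            rw [hay, SimpleGraph.Walk.support_cons]
            exact List.mem_cons_of_mem _ w'.start_mem_support
      · -- x is not a terminal
        have hx' : (x : SV n) ∈ (H.deleteVerts (Set.range Sum.inr)).verts := by
          rw [SimpleGraph.Subgraph.deleteVerts_verts]
          exact ⟨x.2, hx⟩
        have hrest := ih hp.of_cons hx hb hx' hb'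
        refine SimpleGraph.Reachable.trans ?_ hrest
        apply SimpleGraph.Adj.reachable
        simp only [SimpleGraph.Subgraph.coe_adj]
        rw [SimpleGraph.Subgraph.deleteVerts_adj]
        exact ⟨a.2, ha, x.2, hx, h⟩

open scoped Classical in

theorem stmt_10 (n : ℕ) (p q : Fin n → EuclideanSpace ℝ (Fin 2))
    (H : (steinerGraph n).Subgraph) (hH : IsSteinerTree H)
    -- `H` contains exactly one of the two endpoints of each segment
    (hone : ∀ i : Fin n,
      Xor' (Sum.inl (i, false) ∈ H.verts) (Sum.inl (i, true) ∈ H.verts)) :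
    -- deleting the terminals and their incident edges leaves a spanning tree
    -- on the chosen endpoints, of the same cost
    (H.deleteVerts (Set.range Sum.inr)).Connected ∧
    (H.deleteVerts (Set.range Sum.inr)).coe.IsAcyclic ∧
    subCost p q (H.deleteVerts (Set.range Sum.inr)) = subCost p q H := by
  obtain ⟨hconn, hterm, hacyc⟩ := hH
  set H' := H.deleteVerts (Set.range Sum.inr) with hH'def
  have hinl_notin : ∀ (x : Fin n × Bool),
      (Sum.inl x : SV n) ∉ Set.range (Sum.inr : Fin n → SV n) := by
    rintro x ⟨i, hi⟩; exact Sum.inl_ne_inr hi.symm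
  refine ⟨?_, ?_, ?_⟩
  · -- Connected
    rw [SimpleGraph.Subgraph.connected_iff]
    constructor
    · -- Preconnected
      rw [SimpleGraph.Subgraph.preconnected_iff]
      rintro ⟨u, hu⟩ ⟨v, hv⟩
      have hu2 := hu; have hv2 := hv
      rw [SimpleGraph.Subgraph.deleteVerts_verts] at hu2 hv2
      obtain ⟨huH, huS⟩ := hu2
      obtain ⟨hvH, hvS⟩ := hv2
      obtain ⟨w⟩ := hconn.preconnected ⟨u, huH⟩ ⟨v, hvH⟩
      exact lift_walk H hone (w.toPath : H.coe.Walk ⟨u, huH⟩ ⟨v, hvH⟩) w.toPath.2 huS hvS hu hv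
    · -- Nonempty verts
      have hex : ∃ i : Fin n, True := by
        obtain ⟨v0⟩ := hconn.nonempty
        rcases (v0 : SV n) with a | j
        · exact ⟨a.1, trivial⟩
        · exact ⟨j, trivial⟩
      obtain ⟨i, -⟩ := hex
      rcases hone i with ⟨hf, -⟩ | ⟨ht, -⟩
      · exact ⟨Sum.inl (i, false), by
          rw [SimpleGraph.Subgraph.deleteVerts_verts]; exact ⟨hf, hinl_notin _⟩⟩
      · exact ⟨Sum.inl (i, true), by
          rw [SimpleGraph.Subgraph.deleteVerts_verts]; exact ⟨ht, hinl_notin _⟩⟩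
  · -- Acyclic
    intro v c hc
    exact hacyc _ ((hc.map (SimpleGraph.Subgraph.inclusion.injective
      (SimpleGraph.Subgraph.deleteVerts_le)))) 
  · -- Cost
    unfold subCost
    congr 1
    apply Finset.sum_congr rfl
    intro u _
    apply Finset.sum_congr rfl
    intro v _
    rcases u with x | i
    · rcases v with y | j
      · by_cases h : H.Adj (Sum.inl x) (Sum.inl y)
        · have h' : H'.Adj (Sum.inl x) (Sum.inl y) := by
            rw [hH'def, SimpleGraph.Subgraph.deleteVerts_adj]
            exact ⟨H.edge_vert h, hinl_notin _, H.edge_vert h.symm, hinl_notin _, h⟩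
          rw [if_pos h, if_pos h']
        · have h' : ¬ H'.Adj (Sum.inl x) (Sum.inl y) := fun hh =>
            h ((SimpleGraph.Subgraph.deleteVerts_adj.mp hh).2.2.2.2)
          rw [if_neg h, if_neg h']
      · show _ = _
        have : wfun p q (Sum.inl x) (Sum.inr j) = 0 := rfl
        rw [this]; simp
    · show _ = _
      have : ∀ v : SV n, wfun p q (Sum.inr i) v = 0 := fun v => by
        rcases v with y | j <;> rfl
      rw [this]; simp
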